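/- Let H be a finite simple graph, and let φ and d be real-valued functions on V(H) such that φ(v) ≥ d(v) ≥ d_H(v) for every vertex v. Then there exists an independent set I of H such that ∑_{v∈V(H)} (φ(v) − d(v)) ≤ ∑_{v∈I} (d(v)+1)(φ(v) − d(v)). -/
import Mathlib


open Classical Finset

/-- An independent set of a simple graph: no edge joins two of its vertices. -/
def SimpleGraph.IsIndepFinset {V : Type*} (H : SimpleGraph V) (I : Finset V) : Prop :=
  ∀ v ∈ I, ∀ w ∈ I, ¬ H.Adj v w

lemma aux_indep {V : Type*} [Fintype V] (H : SimpleGraph V)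
    (φ d : V → ℝ) (hd : ∀ v, (H.degree v : ℝ) ≤ d v) (hφ : ∀ v, d v ≤ φ v)
    (S : Finset V) :
    ∃ I : Finset V, I ⊆ S ∧ H.IsIndepFinset I ∧
      ∑ v ∈ S, (φ v - d v) ≤ ∑ v ∈ I, (d v + 1) * (φ v - d v) := by
  induction S using Finset.strongInductionOn with
  | _ S ih =>
    rcases S.eq_empty_or_nonempty with rfl | hS
    · exact ⟨∅, by simp, by simp [SimpleGraph.IsIndepFinset], by simp⟩
    obtain ⟨v, hvS, hvmax⟩ := S.exists_max_image (fun u => φ u - d u) hS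
    set N : Finset V := S.filter (fun u => u = v ∨ H.Adj v u) with hN
    have hvN : v ∈ N := by simp [hN, hvS]
    have hNS : N ⊆ S := filter_subset _ _
    have hS' : S \ N ⊂ S := by
      refine Finset.ssubset_iff_of_subset (sdiff_subset) |>.2 ⟨v, hvS, by simp [hvN]⟩
    obtain ⟨I', hI'sub, hI'ind, hI'sum⟩ := ih _ hS'
    have hvI' : v ∉ I' := fun h => (Finset.mem_sdiff.1 (hI'sub h)).2 hvN
    have hwv : (0:ℝ) ≤ φ v - d v := by linarith [hφ v]
    -- card bound
    have hNcard : (N.card : ℝ) ≤ d v + 1 := by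
      have h1 : N ⊆ insert v (H.neighborFinset v) := by
        intro u hu
        rcases (Finset.mem_filter.1 hu).2 with rfl | h
        · exact Finset.mem_insert_self _ _
        · exact Finset.mem_insert_of_mem (by simpa using h)
      have h2 : N.card ≤ H.degree v + 1 := by
        calc N.card ≤ (insert v (H.neighborFinset v)).card := Finset.card_le_card h1
          _ ≤ (H.neighborFinset v).card + 1 := Finset.card_insert_le v _
          _ = H.degree v + 1 := by rw [SimpleGraph.card_neighborFinset_eq_degree]
      have h3 : (N.card : ℝ) ≤ (H.degree v : ℝ) + 1 := by exact_mod_cast h2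
      linarith [hd v]
    have hNsum : ∑ u ∈ N, (φ u - d u) ≤ (d v + 1) * (φ v - d v) := by
      have h1 : ∑ u ∈ N, (φ u - d u) ≤ N.card • (φ v - d v) :=
        Finset.sum_le_card_nsmul _ _ _ (fun u hu => hvmax u (hNS hu))
      have h2 : (N.card : ℝ) * (φ v - d v) ≤ (d v + 1) * (φ v - d v) :=
        mul_le_mul_of_nonneg_right hNcard hwv
      calc ∑ u ∈ N, (φ u - d u) ≤ (N.card : ℝ) * (φ v - d v) := by
            simpa [nsmul_eq_mul] using h1
        _ ≤ _ := h2
    refine ⟨insert v I', ?_, ?_, ?_⟩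
    · exact Finset.insert_subset hvS (hI'sub.trans sdiff_subset)
    · intro a ha b hb hab
      have key : ∀ u ∈ I', ¬ H.Adj v u := fun u hu h =>
        (Finset.mem_sdiff.1 (hI'sub hu)).2
          (Finset.mem_filter.2 ⟨(Finset.mem_sdiff.1 (hI'sub hu)).1, Or.inr h⟩)
      rcases Finset.mem_insert.1 ha with ha | ha <;>
        rcases Finset.mem_insert.1 hb with hb | hb
      · exact H.irrefl (ha ▸ hb ▸ hab)
      · exact key b hb (ha ▸ hab)
      · exact key a ha (SimpleGraph.Adj.symm (hb ▸ hab))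
      · exact hI'ind a ha b hb hab
    · have hsplit : ∑ u ∈ S, (φ u - d u)
          = ∑ u ∈ N, (φ u - d u) + ∑ u ∈ S \ N, (φ u - d u) := by
        rw [← Finset.sum_union (Finset.disjoint_sdiff), Finset.union_sdiff_of_subset hNS]
      rw [hsplit, Finset.sum_insert hvI']
      linarith

theorem weighted_independent_set_surplus {V : Type*} [Fintype V] (H : SimpleGraph V)
    (φ d : V → ℝ) (hd : ∀ v, (H.degree v : ℝ) ≤ d v) (hφ : ∀ v, d v ≤ φ v) :
    ∃ I : Finset V, H.IsIndepFinset I ∧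
      ∑ v, (φ v - d v) ≤ ∑ v ∈ I, (d v + 1) * (φ v - d v) := by
  obtain ⟨I, _, hind, hsum⟩ := aux_indep H φ d hd hφ Finset.univ
  exact ⟨I, hind, hsum⟩
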